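/- Let G be a connected graph on n≥3 vertices that contains a cycle. Then for every η>0 there exists a positive definite matrix A with zeros at the non-edges of G such that the hard-thresholded version of A at level η (setting to zero all off-diagonal entries of absolute value at most η) is not positive definite. -/

import Mathlib

open Matrix
open scoped BigOperators

section Helpers

variable {n : ℕ}

/-- difference of two basis vectors along an edge of the path -/
noncomputable def stmtEdge (p : ℕ → Fin n) (i : ℕ) : Fin n → ℝ :=
  Pi.single (p i) 1 - Pi.single (p (i + 1)) 1

/-- the unscaled construction matrix -/
noncomputable def stmtM (k : ℕ) (p : ℕ → Fin n) : Matrix (Fin n) (Fin n) ℝ :=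
  (∑ i ∈ Finset.range (k - 1), Matrix.vecMulVec (stmtEdge p i) (stmtEdge p i))
    + Matrix.diagonal (fun j => if j ∈ (Finset.range k).image p then 0 else 1)
    + (((k : ℝ) - 1)⁻¹) •
        (Matrix.vecMulVec (Pi.single (p 0) 1) (Pi.single (p (k - 1)) 1)
          + Matrix.vecMulVec (Pi.single (p (k - 1)) 1) (Pi.single (p 0) 1))

lemma stmtEdge_apply (p : ℕ → Fin n) (i : ℕ) (a : Fin n) :
    stmtEdge p i a = (if a = p i then (1 : ℝ) else 0) - (if a = p (i + 1) then 1 else 0) := by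
  simp [stmtEdge, Pi.single_apply]

lemma stmtM_apply (k : ℕ) (p : ℕ → Fin n) (a b : Fin n) :
    stmtM k p a b =
      (∑ i ∈ Finset.range (k - 1), stmtEdge p i a * stmtEdge p i b)
        + (if a = b then (if a ∈ (Finset.range k).image p then (0 : ℝ) else 1) else 0)
        + ((k : ℝ) - 1)⁻¹ *
            ((if a = p 0 then (1 : ℝ) else 0) * (if b = p (k - 1) then 1 else 0)
              + (if a = p (k - 1) then (1 : ℝ) else 0) * (if b = p 0 then 1 else 0)) := by
  simp [stmtM, Matrix.add_apply, Matrix.sum_apply, Matrix.vecMulVec_apply,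
    Matrix.diagonal_apply, Matrix.smul_apply, Pi.single_apply, smul_eq_mul]
  split_ifs <;> ring

lemma dot_sum' {ι : Type*} (s : Finset ι) (x : Fin n → ℝ) (f : ι → Fin n → ℝ) :
    x ⬝ᵥ (∑ i ∈ s, f i) = ∑ i ∈ s, x ⬝ᵥ f i := by
  simp only [dotProduct, Finset.sum_apply, Finset.mul_sum]
  exact Finset.sum_comm

lemma sum_mulVec' {ι : Type*} (s : Finset ι) (N : ι → Matrix (Fin n) (Fin n) ℝ)
    (x : Fin n → ℝ) :
    (∑ i ∈ s, N i) *ᵥ x = ∑ i ∈ s, N i *ᵥ x := by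
  ext a
  simp only [Matrix.mulVec, dotProduct, Matrix.sum_apply, Finset.sum_apply,
    Finset.sum_mul]
  exact Finset.sum_comm

lemma vecMulVec_mulVec'' (u v x : Fin n → ℝ) :
    Matrix.vecMulVec u v *ᵥ x = (v ⬝ᵥ x) • u := by
  ext a
  simp only [Matrix.mulVec, dotProduct, Matrix.vecMulVec_apply, Pi.smul_apply,
    smul_eq_mul, Finset.sum_mul]
  exact Finset.sum_congr rfl fun i _ => by ring

/-- quadratic form of the construction matrix -/
lemma stmtM_quad (k : ℕ) (p : ℕ → Fin n) (x : Fin n → ℝ) :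
    x ⬝ᵥ (stmtM k p *ᵥ x) =
      (∑ i ∈ Finset.range (k - 1), (x (p i) - x (p (i + 1))) ^ 2)
        + (∑ j, (if j ∈ (Finset.range k).image p then (0 : ℝ) else 1) * x j ^ 2)
        + ((k : ℝ) - 1)⁻¹ * (2 * (x (p 0) * x (p (k - 1)))) := by
  have h1 : x ⬝ᵥ ((∑ i ∈ Finset.range (k - 1),
      Matrix.vecMulVec (stmtEdge p i) (stmtEdge p i)) *ᵥ x)
      = ∑ i ∈ Finset.range (k - 1), (x (p i) - x (p (i + 1))) ^ 2 := by
    rw [sum_mulVec', dot_sum']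
    refine Finset.sum_congr rfl fun i _ => ?_
    rw [vecMulVec_mulVec'', dotProduct_smul, smul_eq_mul]
    have hdot : stmtEdge p i ⬝ᵥ x = x (p i) - x (p (i + 1)) := by
      simp [stmtEdge, sub_dotProduct, single_dotProduct]
    have hdot2 : x ⬝ᵥ stmtEdge p i = x (p i) - x (p (i + 1)) := by
      simp [stmtEdge, dotProduct_sub, dotProduct_single]
    rw [hdot, hdot2]; ring
  have h2 : x ⬝ᵥ ((Matrix.diagonal
      (fun j => if j ∈ (Finset.range k).image p then (0:ℝ) else 1)) *ᵥ x)
      = ∑ j, (if j ∈ (Finset.range k).image p then (0 : ℝ) else 1) * x j ^ 2 := by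
    simp only [dotProduct, Matrix.mulVec_diagonal]
    exact Finset.sum_congr rfl fun j _ => by ring
  have h3 : x ⬝ᵥ ((((k : ℝ) - 1)⁻¹ •
      (Matrix.vecMulVec (Pi.single (p 0) 1) (Pi.single (p (k - 1)) 1)
        + Matrix.vecMulVec (Pi.single (p (k - 1)) 1) (Pi.single (p 0) 1))) *ᵥ x)
      = ((k : ℝ) - 1)⁻¹ * (2 * (x (p 0) * x (p (k - 1)))) := by
    rw [Matrix.smul_mulVec, dotProduct_smul, smul_eq_mul,
      Matrix.add_mulVec, dotProduct_add, vecMulVec_mulVec'', vecMulVec_mulVec'',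
      dotProduct_smul, dotProduct_smul]
    simp only [single_dotProduct, dotProduct_single, one_mul, mul_one,
      smul_eq_mul]
    ring
  rw [stmtM, Matrix.add_mulVec, Matrix.add_mulVec, dotProduct_add,
    dotProduct_add, h1, h2, h3]

end Helpers

/-- getVert is injective on `[0, length]` for paths. -/
lemma aux_path_getVert_inj {V : Type*} {G : SimpleGraph V} {u v : V} (q : G.Walk u v)
    (hq : q.IsPath) :
    ∀ i ≤ q.length, ∀ j ≤ q.length, q.getVert i = q.getVert j → i = j := by
  induction q with
  | nil =>
    intro i hi j hj _
    simp only [SimpleGraph.Walk.length_nil, Nat.le_zero] at hi hj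
    omega
  | @cons a b c h q ih =>
    rw [SimpleGraph.Walk.cons_isPath_iff] at hq
    intro i hi j hj heq
    simp only [SimpleGraph.Walk.length_cons] at hi hj
    match i, j with
    | 0, 0 => rfl
    | 0, (m + 1) =>
      exfalso
      apply hq.2
      rw [SimpleGraph.Walk.mem_support_iff_exists_getVert]
      refine ⟨m, ?_, by omega⟩
      have h0 : (SimpleGraph.Walk.cons h q).getVert 0 = a := SimpleGraph.Walk.getVert_zero _
      have h1 : (SimpleGraph.Walk.cons h q).getVert (m + 1) = q.getVert m := rfl
      rw [h0, h1] at heq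
      exact heq.symm
    | (m + 1), 0 =>
      exfalso
      apply hq.2
      rw [SimpleGraph.Walk.mem_support_iff_exists_getVert]
      refine ⟨m, ?_, by omega⟩
      have h0 : (SimpleGraph.Walk.cons h q).getVert 0 = a := SimpleGraph.Walk.getVert_zero _
      have h1 : (SimpleGraph.Walk.cons h q).getVert (m + 1) = q.getVert m := rfl
      rw [h0, h1] at heq
      exact heq
    | (m + 1), (l + 1) =>
      have h1 : (SimpleGraph.Walk.cons h q).getVert (m + 1) = q.getVert m := rfl
      have h2 : (SimpleGraph.Walk.cons h q).getVert (l + 1) = q.getVert l := rfl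
      rw [h1, h2] at heq
      have := ih hq.1 m (by omega) l (by omega) heq
      omega

/-- getVert is injective on `[0, length)` for cycles. -/
lemma aux_cycle_getVert_inj {V : Type*} {G : SimpleGraph V} {v : V} (c : G.Walk v v)
    (hc : c.IsCycle) :
    ∀ i < c.length, ∀ j < c.length, c.getVert i = c.getVert j → i = j := by
  cases c with
  | nil => exact absurd rfl hc.ne_nil
  | @cons _ b _ h q =>
    have hq : q.IsPath := ((SimpleGraph.Walk.cons_isCycle_iff q h).mp hc).1
    intro i hi j hj heq
    simp only [SimpleGraph.Walk.length_cons] at hi hj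
    have hlast : q.getVert q.length = v := SimpleGraph.Walk.getVert_length q
    match i, j with
    | 0, 0 => rfl
    | 0, (m + 1) =>
      exfalso
      have h0 : (SimpleGraph.Walk.cons h q).getVert 0 = v := SimpleGraph.Walk.getVert_zero _
      have h1 : (SimpleGraph.Walk.cons h q).getVert (m + 1) = q.getVert m := rfl
      rw [h0, h1] at heq
      have : m = q.length := aux_path_getVert_inj q hq m (by omega) q.length le_rfl
        (heq.symm.trans hlast.symm)
      omega
    | (m + 1), 0 =>
      exfalso
      have h0 : (SimpleGraph.Walk.cons h q).getVert 0 = v := SimpleGraph.Walk.getVert_zero _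
      have h1 : (SimpleGraph.Walk.cons h q).getVert (m + 1) = q.getVert m := rfl
      rw [h0, h1] at heq
      have : m = q.length := aux_path_getVert_inj q hq m (by omega) q.length le_rfl
        (heq.trans hlast.symm)
      omega
    | (m + 1), (l + 1) =>
      have h1 : (SimpleGraph.Walk.cons h q).getVert (m + 1) = q.getVert m := rfl
      have h2 : (SimpleGraph.Walk.cons h q).getVert (l + 1) = q.getVert l := rfl
      rw [h1, h2] at heq
      have := aux_path_getVert_inj q hq m (by omega) l (by omega) heq
      omega

/-- If `G` is a connected graph on `n ≥ 3` vertices containing a cycle, then for every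
`η > 0` there is a positive definite matrix with zeros at the non-edges of `G` whose
hard-thresholded version at level `η` is not positive definite. -/
theorem stmt_15 {n : ℕ} (hn : 3 ≤ n) (G : SimpleGraph (Fin n)) [DecidableRel G.Adj]
    (hconn : G.Connected) (hcyc : ¬ G.IsAcyclic) (η : ℝ) (hη : 0 < η) :
    ∃ A : Matrix (Fin n) (Fin n) ℝ, A.PosDef ∧
      (∀ i j : Fin n, i ≠ j → ¬ G.Adj i j → A i j = 0) ∧
      ¬ (Matrix.of fun i j : Fin n =>
          if i = j ∨ η < |A i j| then A i j else 0).PosDef := by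
  classical
  -- extract a cycle
  simp only [SimpleGraph.IsAcyclic, not_forall, not_not] at hcyc
  obtain ⟨v, c, hc⟩ := hcyc
  set k : ℕ := c.length with hkdef
  have hk3 : 3 ≤ k := hc.three_le_length
  set p : ℕ → Fin n := c.getVert with hpdef
  have hinj : ∀ i, i < k → ∀ j, j < k → p i = p j → i = j := by
    intro i hi j hj hij
    exact aux_cycle_getVert_inj c hc i hi j hj hij
  have hedge : ∀ i, i < k → G.Adj (p i) (p (i + 1)) := fun i hi => c.adj_getVert_succ hi
  have hwrap : p k = p 0 := by
    rw [hpdef, hkdef]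
    rw [SimpleGraph.Walk.getVert_length, SimpleGraph.Walk.getVert_zero]
  have hclose : G.Adj (p 0) (p (k - 1)) := by
    have h := hedge (k - 1) (by omega)
    rw [show k - 1 + 1 = k by omega, hwrap] at h
    exact h.symm
  have hpk1 : p 0 ≠ p (k - 1) := hclose.ne
  set ε : ℝ := ((k : ℝ) - 1)⁻¹ with hεdef
  have hk1R : (2 : ℝ) ≤ (k : ℝ) - 1 := by
    have : (3 : ℝ) ≤ (k : ℝ) := by exact_mod_cast hk3
    linarith
  have hεpos : 0 < ε := by
    rw [hεdef]; exact inv_pos.mpr (by linarith)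
  have hinv : ε * ((k : ℝ) - 1) = 1 := inv_mul_cancel₀ (by linarith)
  have hεhalf : 2 * ε ≤ 1 := by nlinarith
  have hmemP : ∀ i, i < k → p i ∈ (Finset.range k).image p := fun i hi =>
    Finset.mem_image_of_mem p (Finset.mem_range.mpr hi)
  -- basic facts about edge-vector products
  have hpathne : ∀ i, i < k - 1 → p i ≠ p (i + 1) := by
    intro i hi h
    have := hinj i (by omega) (i + 1) (by omega) h
    omega
  have hterm0 : ∀ i, i < k - 1 → ∀ a b : Fin n, a ≠ b →
      ¬((a = p i ∧ b = p (i + 1)) ∨ (a = p (i + 1) ∧ b = p i)) →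
      stmtEdge p i a * stmtEdge p i b = 0 := by
    intro i hi a b hab hnot
    rw [stmtEdge_apply, stmtEdge_apply]
    by_cases h1 : a = p i
    · have h2 : ¬ b = p (i + 1) := fun h => hnot (Or.inl ⟨h1, h⟩)
      have h3 : ¬ b = p i := fun h => hab (h1.trans h.symm)
      have h4 : ¬ a = p (i + 1) := fun h => hpathne i hi (h1.symm.trans h)
      simp [h2, h3, h4]
    · by_cases h2 : a = p (i + 1)
      · have h3 : ¬ b = p i := fun h => hnot (Or.inr ⟨h2, h⟩)
        have h4 : ¬ b = p (i + 1) := fun h => hab (h2.trans h.symm)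
        simp [h1, h2, h3, h4]
      · simp [h1, h2]
  -- the matrix A
  refine ⟨(2 * η) • stmtM k p, ?_, ?_, ?_⟩
  · -- positive definiteness
    have hherm : ((2 * η) • stmtM k p).IsHermitian := by
      have hsym : ∀ a b : Fin n, stmtM k p a b = stmtM k p b a := by
        intro a b
        rw [stmtM_apply, stmtM_apply]
        by_cases hab : a = b
        · subst hab; rfl
        · rw [if_neg hab, if_neg (Ne.symm hab)]
          rw [Finset.sum_congr rfl fun i _ => mul_comm (stmtEdge p i a) (stmtEdge p i b)]
          ring
      show _ = _
      ext a b
      rw [Matrix.conjTranspose_apply, Matrix.smul_apply, Matrix.smul_apply, smul_eq_mul,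
        smul_eq_mul, hsym b a]
      simp
    refine Matrix.posDef_iff_dotProduct_mulVec.mpr ⟨hherm, ?_⟩
    intro x hx
    have hstar : star x = x := by funext i; simp
    rw [hstar, Matrix.smul_mulVec, dotProduct_smul, smul_eq_mul]
    have hMpos : 0 < x ⬝ᵥ (stmtM k p *ᵥ x) := by
      rw [stmtM_quad]
      set S : ℝ := ∑ i ∈ Finset.range (k - 1), (x (p i) - x (p (i + 1))) ^ 2 with hSdef
      set D : ℝ := ∑ j, (if j ∈ (Finset.range k).image p then (0 : ℝ) else 1) * x j ^ 2
        with hDdef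
      have hSnn : 0 ≤ S := Finset.sum_nonneg fun i _ => sq_nonneg _
      have hDnn : 0 ≤ D := Finset.sum_nonneg fun j _ => by
        by_cases h : j ∈ (Finset.range k).image p <;> simp [h, sq_nonneg]
      have htel : ∑ i ∈ Finset.range (k - 1), (x (p i) - x (p (i + 1)))
          = x (p 0) - x (p (k - 1)) :=
        Finset.sum_range_sub' (fun i => x (p i)) (k - 1)
      have hCS : (x (p 0) - x (p (k - 1))) ^ 2 ≤ ((k : ℝ) - 1) * S := by
        have h := sq_sum_le_card_mul_sum_sq
          (s := Finset.range (k - 1)) (f := fun i => x (p i) - x (p (i + 1)))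
        rw [htel, Finset.card_range] at h
        have hcast : ((k - 1 : ℕ) : ℝ) = (k : ℝ) - 1 := by
          push_cast [Nat.cast_sub (by omega : 1 ≤ k)]; ring
        rw [hcast] at h
        exact h
      have h4 : -(4 * (x (p 0) * x (p (k - 1)))) ≤ ((k : ℝ) - 1) * S := by
        nlinarith [sq_nonneg (x (p 0) + x (p (k - 1)))]
      have h5 : ε * (((k : ℝ) - 1) * S) = S := by rw [← mul_assoc, hinv, one_mul]
      have hkey : -(S / 2) ≤ ε * (2 * (x (p 0) * x (p (k - 1)))) := by
        have h6 := mul_le_mul_of_nonneg_left h4 hεpos.le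
        nlinarith
      by_cases hS0 : S = 0
      · by_cases hD0 : D = 0
        · -- x is constant on the cycle and zero off it
          have hterms : ∀ i ∈ Finset.range (k - 1), (x (p i) - x (p (i + 1))) ^ 2 = 0 := by
            rw [← Finset.sum_eq_zero_iff_of_nonneg fun i _ => sq_nonneg _]
            exact hS0.symm ▸ hSdef.symm
          have hstep : ∀ i, i < k - 1 → x (p (i + 1)) = x (p i) := by
            intro i hi
            have := hterms i (Finset.mem_range.mpr hi)
            have := pow_eq_zero_iff (n := 2) (by norm_num) |>.mp this
            linarith [sub_eq_zero.mp this]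
          have hconst : ∀ i, i ≤ k - 1 → x (p i) = x (p 0) := by
            intro i
            induction i with
            | zero => intro _; rfl
            | succ m ih =>
              intro hm
              rw [hstep m (by omega), ih (by omega)]
          have hoff : ∀ j, j ∉ (Finset.range k).image p → x j = 0 := by
            intro j hj
            have hterms2 : ∀ j' ∈ (Finset.univ : Finset (Fin n)),
                (if j' ∈ (Finset.range k).image p then (0 : ℝ) else 1) * x j' ^ 2 = 0 := by
              rw [← Finset.sum_eq_zero_iff_of_nonneg fun j' _ => by
                by_cases h : j' ∈ (Finset.range k).image p <;> simp [h, sq_nonneg]]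
              exact hD0.symm ▸ hDdef.symm
            have := hterms2 j (Finset.mem_univ j)
            rw [if_neg hj, one_mul] at this
            exact pow_eq_zero_iff (n := 2) (by norm_num) |>.mp this
          have ha0 : x (p 0) ≠ 0 := by
            obtain ⟨j, hj⟩ := Function.ne_iff.mp hx
            intro h0
            apply hj
            by_cases hjP : j ∈ (Finset.range k).image p
            · obtain ⟨i, hi, hij⟩ := Finset.mem_image.mp hjP
              rw [Finset.mem_range] at hi
              have := hconst i (by omega)
              rw [← hij, this, h0]; rfl
            · rw [hoff j hjP]; rfl
          have hb : x (p (k - 1)) = x (p 0) := hconst (k - 1) le_rfl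
          rw [hS0, hD0, hb]
          have : 0 < x (p 0) * x (p 0) := mul_self_pos.mpr ha0
          nlinarith
        · have hD : 0 < D := lt_of_le_of_ne hDnn (Ne.symm hD0)
          linarith
      · have hS : 0 < S := lt_of_le_of_ne hSnn (Ne.symm hS0)
        linarith
    nlinarith
  · -- zeros at non-edges
    intro a b hab hnadj
    rw [Matrix.smul_apply, smul_eq_mul, stmtM_apply]
    have h1 : ∀ i ∈ Finset.range (k - 1), stmtEdge p i a * stmtEdge p i b = 0 := by
      intro i hi
      rw [Finset.mem_range] at hi
      refine hterm0 i hi a b hab ?_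
      rintro (⟨rfl, rfl⟩ | ⟨rfl, rfl⟩)
      · exact hnadj (hedge i (by omega))
      · exact hnadj (hedge i (by omega)).symm
    rw [Finset.sum_eq_zero h1, if_neg hab]
    have h2 : (if a = p 0 then (1 : ℝ) else 0) * (if b = p (k - 1) then 1 else 0) = 0 := by
      by_cases ha : a = p 0
      · by_cases hb : b = p (k - 1)
        · exact absurd (ha ▸ hb ▸ hclose) hnadj
        · simp [hb]
      · simp [ha]
    have h3 : (if a = p (k - 1) then (1 : ℝ) else 0) * (if b = p 0 then 1 else 0) = 0 := by
      by_cases ha : a = p (k - 1)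
      · by_cases hb : b = p 0
        · exact absurd (ha ▸ hb ▸ hclose.symm) hnadj
        · simp [hb]
      · simp [ha]
    rw [h2, h3]
    ring
  · -- the thresholded matrix is not positive definite
    intro hPD
    set A : Matrix (Fin n) (Fin n) ℝ := (2 * η) • stmtM k p with hAdef
    -- corner entries of A
    have hsumcorner : ∀ a b : Fin n,
        ((a = p 0 ∧ b = p (k - 1)) ∨ (a = p (k - 1) ∧ b = p 0)) →
        ∀ i ∈ Finset.range (k - 1), stmtEdge p i a * stmtEdge p i b = 0 := by
      intro a b hcor i hi
      rw [Finset.mem_range] at hi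
      have hab : a ≠ b := by
        rcases hcor with ⟨rfl, rfl⟩ | ⟨rfl, rfl⟩
        · exact hpk1
        · exact hpk1.symm
      refine hterm0 i hi a b hab ?_
      rintro (⟨h3, h4⟩ | ⟨h3, h4⟩) <;> rcases hcor with ⟨h1, h2⟩ | ⟨h1, h2⟩
      · have e1 : i = 0 := hinj i (by omega) 0 (by omega) (h3.symm.trans h1)
        have e2 : i + 1 = k - 1 :=
          hinj (i + 1) (by omega) (k - 1) (by omega) (h4.symm.trans h2)
        omega
      · have e1 : i = k - 1 := hinj i (by omega) (k - 1) (by omega) (h3.symm.trans h1)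
        omega
      · have e1 : i + 1 = 0 := hinj (i + 1) (by omega) 0 (by omega) (h3.symm.trans h1)
        omega
      · have e1 : i + 1 = k - 1 :=
          hinj (i + 1) (by omega) (k - 1) (by omega) (h3.symm.trans h1)
        have e2 : i = 0 := hinj i (by omega) 0 (by omega) (h4.symm.trans h2)
        omega
    have hAcorner1 : A (p 0) (p (k - 1)) = 2 * η * ε := by
      rw [hAdef, Matrix.smul_apply, smul_eq_mul, stmtM_apply]
      rw [Finset.sum_eq_zero (hsumcorner _ _ (Or.inl ⟨rfl, rfl⟩))]
      rw [if_neg hpk1]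
      rw [if_pos rfl, if_pos rfl, if_neg hpk1.symm, if_neg hpk1]
      ring
    have hAcorner2 : A (p (k - 1)) (p 0) = 2 * η * ε := by
      rw [hAdef, Matrix.smul_apply, smul_eq_mul, stmtM_apply]
      rw [Finset.sum_eq_zero (hsumcorner _ _ (Or.inr ⟨rfl, rfl⟩))]
      rw [if_neg hpk1.symm]
      rw [if_pos rfl, if_pos rfl, if_neg hpk1.symm, if_neg hpk1]
      ring
    have hcorner_small : ¬ (η < |2 * η * ε|) := by
      rw [abs_of_nonneg (by positivity)]
      push_neg
      nlinarith
    -- classification of off-diagonal entries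
    have hclassify : ∀ a b : Fin n, a ≠ b →
        ¬((a = p 0 ∧ b = p (k - 1)) ∨ (a = p (k - 1) ∧ b = p 0)) →
        stmtM k p a b = 0 ∨ stmtM k p a b = -1 := by
      intro a b hab hcor
      rw [stmtM_apply, if_neg hab]
      have hc1 : (if a = p 0 then (1 : ℝ) else 0) * (if b = p (k - 1) then 1 else 0) = 0 := by
        by_cases ha : a = p 0
        · by_cases hb : b = p (k - 1)
          · exact absurd (Or.inl ⟨ha, hb⟩) hcor
          · simp [hb]
        · simp [ha]
      have hc2 : (if a = p (k - 1) then (1 : ℝ) else 0) * (if b = p 0 then 1 else 0) = 0 := by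
        by_cases ha : a = p (k - 1)
        · by_cases hb : b = p 0
          · exact absurd (Or.inr ⟨ha, hb⟩) hcor
          · simp [hb]
        · simp [ha]
      rw [hc1, hc2]
      by_cases hex : ∃ i, i ∈ Finset.range (k - 1) ∧
          ((a = p i ∧ b = p (i + 1)) ∨ (a = p (i + 1) ∧ b = p i))
      · right
        obtain ⟨i0, hi0, hcase⟩ := hex
        rw [Finset.sum_eq_single_of_mem i0 hi0]
        · rw [Finset.mem_range] at hi0
          have hne : p i0 ≠ p (i0 + 1) := hpathne i0 hi0
          rcases hcase with ⟨rfl, rfl⟩ | ⟨rfl, rfl⟩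
          · rw [stmtEdge_apply, stmtEdge_apply]
            rw [if_pos rfl, if_neg hne, if_neg hne.symm, if_pos rfl]
            ring
          · rw [stmtEdge_apply, stmtEdge_apply]
            rw [if_neg hne.symm, if_pos rfl, if_pos rfl, if_neg hne]
            ring
        · intro j hj hjne
          rw [Finset.mem_range] at hj hi0
          refine hterm0 j hj a b hab ?_
          rintro (⟨h1, h2⟩ | ⟨h1, h2⟩) <;> rcases hcase with ⟨h3, h4⟩ | ⟨h3, h4⟩
          · exact hjne (hinj j (by omega) i0 (by omega) (h1.symm.trans h3)).symm.symm
          · have e1 : j = i0 + 1 := hinj j (by omega) (i0 + 1) (by omega) (h1.symm.trans h3)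
            have e2 : j + 1 = i0 := hinj (j + 1) (by omega) i0 (by omega) (h2.symm.trans h4)
            omega
          · have e1 : j + 1 = i0 := hinj (j + 1) (by omega) i0 (by omega) (h1.symm.trans h3)
            have e2 : j = i0 + 1 := hinj j (by omega) (i0 + 1) (by omega) (h2.symm.trans h4)
            omega
          · have e1 : j + 1 = i0 + 1 := hinj (j + 1) (by omega) (i0 + 1) (by omega)
              (h1.symm.trans h3)
            omega
      · left
        rw [Finset.sum_eq_zero]
        · ring
        · intro i hi
          refine hterm0 i (Finset.mem_range.mp hi) a b hab ?_
          intro hcontra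
          exact hex ⟨i, hi, hcontra⟩
    -- the thresholded matrix equals A minus the corner
    have hBentry : ∀ a b : Fin n,
        (Matrix.of fun i j : Fin n => if i = j ∨ η < |A i j| then A i j else 0) a b
          = A a b - (2 * η * ε) *
              ((if a = p 0 then (1 : ℝ) else 0) * (if b = p (k - 1) then 1 else 0)
                + (if a = p (k - 1) then (1 : ℝ) else 0) * (if b = p 0 then 1 else 0)) := by
      intro a b
      rw [Matrix.of_apply]
      by_cases hab : a = b
      · rw [if_pos (Or.inl hab)]
        subst hab
        have hz : (if a = p 0 then (1 : ℝ) else 0) * (if a = p (k - 1) then 1 else 0)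
            + (if a = p (k - 1) then (1 : ℝ) else 0) * (if a = p 0 then 1 else 0) = 0 := by
          by_cases ha : a = p 0
          · rw [if_neg (fun h => hpk1 (ha.symm.trans h))]; ring
          · rw [if_neg ha]; ring
        rw [hz]; ring
      · by_cases hcor : (a = p 0 ∧ b = p (k - 1)) ∨ (a = p (k - 1) ∧ b = p 0)
        · have hAab : A a b = 2 * η * ε := by
            rcases hcor with ⟨rfl, rfl⟩ | ⟨rfl, rfl⟩
            · exact hAcorner1
            · exact hAcorner2
          have hcond : ¬(a = b ∨ η < |A a b|) := by
            rw [hAab]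
            push_neg
            exact ⟨hab, by
              rw [abs_of_nonneg (by positivity)] at hcorner_small ⊢
              push_neg at hcorner_small
              exact hcorner_small⟩
          rw [if_neg hcond, hAab]
          rcases hcor with ⟨rfl, rfl⟩ | ⟨rfl, rfl⟩
          · rw [if_pos rfl, if_pos rfl, if_neg hpk1.symm, if_neg hpk1]
            ring
          · rw [if_pos rfl, if_pos rfl, if_neg hpk1.symm, if_neg hpk1]
            ring
        · have hz : (if a = p 0 then (1 : ℝ) else 0) * (if b = p (k - 1) then 1 else 0)
              + (if a = p (k - 1) then (1 : ℝ) else 0) * (if b = p 0 then 1 else 0) = 0 := by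
            have hc1 : (if a = p 0 then (1 : ℝ) else 0) * (if b = p (k - 1) then 1 else 0)
                = 0 := by
              by_cases ha : a = p 0
              · by_cases hb : b = p (k - 1)
                · exact absurd (Or.inl ⟨ha, hb⟩) hcor
                · simp [hb]
              · simp [ha]
            have hc2 : (if a = p (k - 1) then (1 : ℝ) else 0) * (if b = p 0 then 1 else 0)
                = 0 := by
              by_cases ha : a = p (k - 1)
              · by_cases hb : b = p 0
                · exact absurd (Or.inr ⟨ha, hb⟩) hcor
                · simp [hb]
              · simp [ha]
            rw [hc1, hc2]; ring
          rw [hz, mul_zero, sub_zero]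
          rcases hclassify a b hab hcor with h0 | hm1
          · have hA0 : A a b = 0 := by
              rw [hAdef, Matrix.smul_apply, smul_eq_mul, h0]; ring
            by_cases hcond : a = b ∨ η < |A a b|
            · rw [if_pos hcond]
            · rw [if_neg hcond, hA0]
          · have hAab : A a b = -(2 * η) := by
              rw [hAdef, Matrix.smul_apply, smul_eq_mul, hm1]; ring
            rw [if_pos (Or.inr (by rw [hAab, abs_neg, abs_of_nonneg (by positivity)]; linarith))]
    -- test vector: indicator of the cycle
    set vv : Fin n → ℝ := fun j => if j ∈ (Finset.range k).image p then 1 else 0 with hvvdef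
    have hvv0 : vv (p 0) = 1 := by rw [hvvdef]; simp only [if_pos (hmemP 0 (by omega))]
    have hvvk : vv (p (k - 1)) = 1 := by
      rw [hvvdef]; simp only [if_pos (hmemP (k - 1) (by omega))]
    have hvne : vv ≠ 0 := by
      intro h
      have := congrFun h (p 0)
      rw [hvv0] at this
      exact one_ne_zero this
    have h2 := hPD.dotProduct_mulVec_pos hvne
    have hstar : star vv = vv := by funext i; simp
    rw [hstar] at h2
    -- compute the quadratic form of the thresholded matrix at vv
    have hBmat : (Matrix.of fun i j : Fin n => if i = j ∨ η < |A i j| then A i j else 0)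
        = A - (2 * η * ε) •
            (Matrix.vecMulVec (Pi.single (p 0) 1) (Pi.single (p (k - 1)) 1)
              + Matrix.vecMulVec (Pi.single (p (k - 1)) 1) (Pi.single (p 0) 1)) := by
      ext a b
      rw [hBentry a b, Matrix.sub_apply, Matrix.smul_apply, Matrix.add_apply,
        Matrix.vecMulVec_apply, Matrix.vecMulVec_apply, smul_eq_mul, Pi.single_apply,
        Pi.single_apply, Pi.single_apply, Pi.single_apply]
    rw [hBmat, Matrix.sub_mulVec, dotProduct_sub] at h2
    have hAvv : vv ⬝ᵥ (A *ᵥ vv) = 2 * η * (ε * 2) := by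
      rw [hAdef, Matrix.smul_mulVec, dotProduct_smul, smul_eq_mul, stmtM_quad]
      have hS : (∑ i ∈ Finset.range (k - 1), (vv (p i) - vv (p (i + 1))) ^ 2) = 0 := by
        refine Finset.sum_eq_zero fun i hi => ?_
        rw [Finset.mem_range] at hi
        have h1 : vv (p i) = 1 := by
          rw [hvvdef]; simp only [if_pos (hmemP i (by omega))]
        have h2' : vv (p (i + 1)) = 1 := by
          rw [hvvdef]; simp only [if_pos (hmemP (i + 1) (by omega))]
        rw [h1, h2']; ring
      have hD : (∑ j, (if j ∈ (Finset.range k).image p then (0 : ℝ) else 1) * vv j ^ 2)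
          = 0 := by
        refine Finset.sum_eq_zero fun j _ => ?_
        by_cases hj : j ∈ (Finset.range k).image p
        · rw [if_pos hj]; ring
        · rw [if_neg hj, hvvdef]
          simp only [if_neg hj]
          ring
      rw [hS, hD, hvv0, hvvk]
      ring
    have hCvv : vv ⬝ᵥ (((2 * η * ε) •
        (Matrix.vecMulVec (Pi.single (p 0) 1) (Pi.single (p (k - 1)) 1)
          + Matrix.vecMulVec (Pi.single (p (k - 1)) 1) (Pi.single (p 0) 1))) *ᵥ vv)
        = 2 * η * ε * 2 := by
      rw [Matrix.smul_mulVec, dotProduct_smul, smul_eq_mul,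
        Matrix.add_mulVec, dotProduct_add, vecMulVec_mulVec'', vecMulVec_mulVec'',
        dotProduct_smul, dotProduct_smul]
      simp only [single_dotProduct, dotProduct_single, one_mul, mul_one,
        smul_eq_mul]
      rw [hvv0, hvvk]
      ring
    rw [hAvv, hCvv] at h2
    linarith
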